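/- Let A be an m×n design matrix and let u, v ∈ ℤⁿ_{≥0} be nonzero data vectors such that A·(u/|u|₁) = A·(v/|v|₁). Then the set of maximizers of the likelihood function f_u over Θ equals the set of maximizers of f_v over Θ; in particular u and v have the same maximum likelihood estimators. -/

import Mathlib

/- STATEMENT 0: Two data vectors with the same sufficient statistics
   `A·(u/|u|₁) = A·(v/|v|₁)` have the same set of maximum likelihood estimators. -/

open scoped BigOperators

noncomputable section

/-- `A` is a design matrix: all column sums are equal. -/
def IsDesign {m n : ℕ} (A : Matrix (Fin m) (Fin n) ℤ) : Prop :=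
  ∃ c : ℤ, ∀ j, ∑ i, A i j = c

/-- The parameter space Θ of the toric model of `A`. -/
def paramSpace {m n : ℕ} (A : Matrix (Fin m) (Fin n) ℤ) : Set (Fin m → ℝ) :=
  {θ | (∀ i, 0 < θ i) ∧ ∑ j, ∏ i, θ i ^ A i j = 1}

/-- The likelihood function `f_u(θ) = (|u|₁!/(u₁!⋯uₙ!)) ∏_j p_j(θ)^{u_j}`. -/
def likelihood {m n : ℕ} (A : Matrix (Fin m) (Fin n) ℤ) (u : Fin n → ℕ)
    (θ : Fin m → ℝ) : ℝ :=
  (Nat.multinomial Finset.univ u : ℝ) * ∏ j, (∏ i, θ i ^ A i j) ^ u j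

lemma zpow_sum₀ {ι : Type*} {x : ℝ} (hx : x ≠ 0) (s : Finset ι) (c : ι → ℤ) :
    x ^ (∑ j ∈ s, c j) = ∏ j ∈ s, x ^ c j := by
  classical
  induction s using Finset.induction with
  | empty => simp
  | insert _ _ h ih => rw [Finset.sum_insert h, Finset.prod_insert h, zpow_add₀ hx, ih]

lemma prod_pow_eq {m n : ℕ} (A : Matrix (Fin m) (Fin n) ℤ) (u : Fin n → ℕ)
    (θ : Fin m → ℝ) (hθ : ∀ i, 0 < θ i) :
    ∏ j, (∏ i, θ i ^ A i j) ^ u j = ∏ i, θ i ^ (∑ j, A i j * (u j : ℤ)) := by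
  have h : ∀ j : Fin n, (∏ i, θ i ^ A i j) ^ u j = ∏ i, θ i ^ (A i j * (u j : ℤ)) := by
    intro j
    rw [← Finset.prod_pow]
    exact Finset.prod_congr rfl fun i _ => by rw [zpow_mul, zpow_natCast]
  rw [Finset.prod_congr rfl fun j _ => h j, Finset.prod_comm]
  exact Finset.prod_congr rfl fun i _ => (zpow_sum₀ (hθ i).ne' _ _).symm

lemma prod_pow_pos {m n : ℕ} (A : Matrix (Fin m) (Fin n) ℤ) (u : Fin n → ℕ)
    (θ : Fin m → ℝ) (hθ : ∀ i, 0 < θ i) :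
    0 < ∏ j, (∏ i, θ i ^ A i j) ^ u j :=
  Finset.prod_pos fun j _ => pow_pos (Finset.prod_pos fun i _ => zpow_pos (hθ i) _) _

lemma sum_pos_of_ne_zero {n : ℕ} {u : Fin n → ℕ} (hu : u ≠ 0) : 0 < ∑ j', u j' := by
  rcases Nat.eq_zero_or_pos (∑ j', u j') with h | h
  · exact absurd (funext fun j => (Finset.sum_eq_zero_iff.mp h) j (Finset.mem_univ j)) hu
  · exact h

lemma key_iff {m n : ℕ} (A : Matrix (Fin m) (Fin n) ℤ)
    (u v : Fin n → ℕ) (hu : u ≠ 0) (hv : v ≠ 0)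
    (huv : ∀ i, ∑ j, (A i j : ℝ) * ((u j : ℝ) / ((∑ j', u j' : ℕ) : ℝ)) =
               ∑ j, (A i j : ℝ) * ((v j : ℝ) / ((∑ j', v j' : ℕ) : ℝ)))
    (θ θ' : Fin m → ℝ) (hθ : ∀ i, 0 < θ i) (hθ' : ∀ i, 0 < θ' i) :
    likelihood A u θ' ≤ likelihood A u θ ↔ likelihood A v θ' ≤ likelihood A v θ := by
  set U : ℕ := ∑ j', u j' with hUdef
  set V : ℕ := ∑ j', v j' with hVdef
  have hUpos : 0 < U := sum_pos_of_ne_zero hu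
  have hVpos : 0 < V := sum_pos_of_ne_zero hv
  -- integer sufficient statistics
  set su : Fin m → ℤ := fun i => ∑ j, A i j * (u j : ℤ) with hsu
  set sv : Fin m → ℤ := fun i => ∑ j, A i j * (v j : ℤ) with hsv
  have hkey : ∀ i, su i * (V : ℤ) = sv i * (U : ℤ) := by
    intro i
    have h := huv i
    have hU0 : (U : ℝ) ≠ 0 := Nat.cast_ne_zero.mpr hUpos.ne'
    have hV0 : (V : ℝ) ≠ 0 := Nat.cast_ne_zero.mpr hVpos.ne'
    have hL : ∑ j, (A i j : ℝ) * ((u j : ℝ) / (U : ℝ)) = ((su i : ℝ)) / (U : ℝ) := by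
      rw [hsu]; push_cast; rw [Finset.sum_div]
      exact Finset.sum_congr rfl (fun j _ => by ring)
    have hR : ∑ j, (A i j : ℝ) * ((v j : ℝ) / (V : ℝ)) = ((sv i : ℝ)) / (V : ℝ) := by
      rw [hsv]; push_cast; rw [Finset.sum_div]
      exact Finset.sum_congr rfl (fun j _ => by ring)
    rw [hL, hR, div_eq_div_iff hU0 hV0] at h
    exact_mod_cast h
  -- the monomial parts
  have hpow : ∀ (w : Fin n → ℕ) (sw : Fin m → ℤ), (∀ (θ₀ : Fin m → ℝ), (∀ i, 0 < θ₀ i) →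
      ∏ j, (∏ i, θ₀ i ^ A i j) ^ w j = ∏ i, θ₀ i ^ sw i) →
      ∀ (N : ℕ) (θ₀ : Fin m → ℝ), (∀ i, 0 < θ₀ i) →
      (∏ j, (∏ i, θ₀ i ^ A i j) ^ w j) ^ N = ∏ i, θ₀ i ^ (sw i * (N : ℤ)) := by
    intro w sw hw N θ₀ hθ₀
    rw [hw θ₀ hθ₀, ← Finset.prod_pow]
    exact Finset.prod_congr rfl fun i _ => by rw [zpow_mul, zpow_natCast]
  have hEq : ∀ (θ₀ : Fin m → ℝ), (∀ i, 0 < θ₀ i) →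
      (∏ j, (∏ i, θ₀ i ^ A i j) ^ u j) ^ V = (∏ j, (∏ i, θ₀ i ^ A i j) ^ v j) ^ U := by
    intro θ₀ hθ₀
    rw [hpow u su (fun θ₁ hθ₁ => prod_pow_eq A u θ₁ hθ₁) V θ₀ hθ₀,
        hpow v sv (fun θ₁ hθ₁ => prod_pow_eq A v θ₁ hθ₁) U θ₀ hθ₀]
    exact Finset.prod_congr rfl fun i _ => by rw [hkey i]
  -- compare
  have hcu : (0 : ℝ) < (Nat.multinomial Finset.univ u : ℝ) :=
    Nat.cast_pos.mpr (Nat.multinomial_pos _ _)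
  have hcv : (0 : ℝ) < (Nat.multinomial Finset.univ v : ℝ) :=
    Nat.cast_pos.mpr (Nat.multinomial_pos _ _)
  unfold likelihood
  rw [mul_le_mul_iff_right₀ hcu, mul_le_mul_iff_right₀ hcv]
  rw [← pow_le_pow_iff_left₀ (prod_pow_pos A u θ' hθ').le (prod_pow_pos A u θ hθ).le
        hVpos.ne' ,
      ← pow_le_pow_iff_left₀ (prod_pow_pos A v θ' hθ').le (prod_pow_pos A v θ hθ).le
        hUpos.ne' ]
  rw [hEq θ hθ, hEq θ' hθ']

theorem stmt0 {m n : ℕ} (A : Matrix (Fin m) (Fin n) ℤ) (hA : IsDesign A)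
    (u v : Fin n → ℕ) (hu : u ≠ 0) (hv : v ≠ 0)
    (huv : ∀ i, ∑ j, (A i j : ℝ) * ((u j : ℝ) / ((∑ j', u j' : ℕ) : ℝ)) =
               ∑ j, (A i j : ℝ) * ((v j : ℝ) / ((∑ j', v j' : ℕ) : ℝ))) :
    {θ ∈ paramSpace A | IsMaxOn (likelihood A u) (paramSpace A) θ} =
    {θ ∈ paramSpace A | IsMaxOn (likelihood A v) (paramSpace A) θ} := by
  ext θ
  simp only [Set.mem_setOf_eq]
  constructor
  · rintro ⟨hθ, hmax⟩
    refine ⟨hθ, fun θ' hθ' => ?_⟩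
    exact (key_iff A u v hu hv huv θ θ' hθ.1 hθ'.1).mp (hmax hθ')
  · rintro ⟨hθ, hmax⟩
    refine ⟨hθ, fun θ' hθ' => ?_⟩
    exact (key_iff A u v hu hv huv θ θ' hθ.1 hθ'.1).mpr (hmax hθ')
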